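/- Let m be a positive integer. The congruence x² + 3x + 3 ≡ 0 (mod m) has an integer solution if and only if m is odd, 9 ∤ m, and for every prime p > 3 dividing m, −3 is a quadratic residue modulo p. -/

import Mathlib

/-- `a` is a quadratic residue modulo the prime `p`: `p ∤ a` and `x² ≡ a (mod p)`
is solvable. -/
def IsQuadraticResidue (a : ℤ) (p : ℕ) : Prop :=
  ¬ (p : ℤ) ∣ a ∧ ∃ x : ℤ, Int.ModEq p (x ^ 2) a

/-- Bridge between integer divisibility and ZMod. -/
lemma bridge (m : ℕ) :
    (∃ x : ℤ, (m : ℤ) ∣ x ^ 2 + 3 * x + 3) ↔ (∃ x : ZMod m, x ^ 2 + 3 * x + 3 = 0) := by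
  constructor
  · rintro ⟨x, hx⟩
    refine ⟨(x : ZMod m), ?_⟩
    have : ((x ^ 2 + 3 * x + 3 : ℤ) : ZMod m) = 0 :=
      (ZMod.intCast_zmod_eq_zero_iff_dvd _ m).2 hx
    push_cast at this
    exact this
  · rintro ⟨x, hx⟩
    obtain ⟨y, rfl⟩ := ZMod.intCast_surjective x
    refine ⟨y, (ZMod.intCast_zmod_eq_zero_iff_dvd _ m).1 ?_⟩
    push_cast
    exact hx

/-- Hensel-style lifting for prime powers, p > 3. -/
lemma prime_pow_sol (p : ℕ) (hp : p.Prime) (hp3 : 3 < p)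
    (hqr : IsQuadraticResidue (-3) p) :
    ∀ n : ℕ, 0 < n → ∃ x : ℤ, ((p : ℤ)) ^ n ∣ x ^ 2 + 3 * x + 3 := by
  have hpz : Prime (p : ℤ) := Nat.prime_iff_prime_int.1 hp
  intro n hn
  induction n with
  | zero => exact absurd hn (by simp)
  | succ k ih =>
    rcases Nat.eq_zero_or_pos k with hk | hk
    · -- base case: k = 0, need solution mod p
      subst hk
      obtain ⟨_, y, hy⟩ := hqr
      have hyd : (p : ℤ) ∣ y ^ 2 + 3 := by
        have := Int.ModEq.dvd hy
        simpa using (dvd_neg.mpr this)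
      obtain ⟨d, hd⟩ := hyd
      have h2 : IsCoprime ((p : ℤ)) 2 := by
        rw [hpz.coprime_iff_not_dvd]
        intro h
        have : (p : ℤ) ∣ ((2 : ℕ) : ℤ) := by exact_mod_cast h
        have h2' := Int.natCast_dvd_natCast.mp this
        have := Nat.le_of_dvd (by norm_num) h2'
        omega
      obtain ⟨a, b, hab⟩ := h2
      refine ⟨b * (y - 3), ?_⟩
      have h4 : (p : ℤ) ∣ 4 * ((b * (y - 3)) ^ 2 + 3 * (b * (y - 3)) + 3) := by
        refine ⟨d - 2 * y * a * (y - 3) + a ^ 2 * (p : ℤ) * (y - 3) ^ 2, ?_⟩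
        linear_combination hd + ((2 * b + 1 - a * (p : ℤ)) * (y - 3) ^ 2 + 6 * (y - 3)) * hab
      have h4c : IsCoprime ((p : ℤ)) 4 := by
        rw [hpz.coprime_iff_not_dvd]
        intro h
        have : (p : ℤ) ∣ ((4 : ℕ) : ℤ) := by exact_mod_cast h
        have h4' := Int.natCast_dvd_natCast.mp this
        have := Nat.le_of_dvd (by norm_num) h4'
        have hp4 : p = 4 := by omega
        subst hp4
        exact absurd hp (by norm_num)
      simpa [pow_one] using (h4c.dvd_of_dvd_mul_left h4)
    · -- inductive step
      obtain ⟨x, hx⟩ := ih hk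
      obtain ⟨c, hc⟩ := hx
      have hnd : ¬ (p : ℤ) ∣ (2 * x + 3) := by
        intro h
        have hpfx : (p : ℤ) ∣ x ^ 2 + 3 * x + 3 := by
          refine dvd_trans ?_ ⟨c, hc⟩
          exact dvd_pow_self _ hk.ne'
        have : (p : ℤ) ∣ (3 : ℤ) := by
          have : (p : ℤ) ∣ (2 * x + 3) ^ 2 - 4 * (x ^ 2 + 3 * x + 3) := by
            exact dvd_sub (dvd_pow h (by norm_num)) (Dvd.dvd.mul_left hpfx 4)
          have h3 : (2 * x + 3 : ℤ) ^ 2 - 4 * (x ^ 2 + 3 * x + 3) = -3 := by ring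
          rw [h3] at this
          exact (dvd_neg.mp this)
        have : (p : ℤ) ∣ ((3 : ℕ) : ℤ) := by exact_mod_cast this
        have h3' := Int.natCast_dvd_natCast.mp this
        have := Nat.le_of_dvd (by norm_num) h3'
        omega
      have hcop : IsCoprime ((p : ℤ)) (2 * x + 3) := hpz.coprime_iff_not_dvd.mpr hnd
      obtain ⟨a, b, hab⟩ := hcop
      set t : ℤ := -c * b with ht
      refine ⟨x + t * (p : ℤ) ^ k, ?_⟩
      have key : (x + t * (p : ℤ) ^ k) ^ 2 + 3 * (x + t * (p : ℤ) ^ k) + 3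
          = c * a * (p : ℤ) * (p : ℤ) ^ k + t ^ 2 * ((p : ℤ) ^ k) ^ 2 := by
        rw [ht]
        linear_combination hc - (c * (p : ℤ) ^ k) * hab
      rw [key]
      refine dvd_add ⟨c * a, by ring⟩ (Dvd.dvd.mul_left ?_ _)
      rw [← pow_mul]
      exact pow_dvd_pow _ (by omega)

theorem stmt_11 (m : ℕ) (hm : 0 < m) :
    (∃ x : ℤ, Int.ModEq m (x ^ 2 + 3 * x + 3) 0) ↔
    (Odd m ∧ ¬ (9 ∣ m) ∧
      ∀ p : ℕ, p.Prime → 3 < p → p ∣ m → IsQuadraticResidue (-3) p) := by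
  have hdvd : ∀ x : ℤ, Int.ModEq m (x ^ 2 + 3 * x + 3) 0 ↔ (m : ℤ) ∣ x ^ 2 + 3 * x + 3 := by
    intro x
    rw [Int.modEq_zero_iff_dvd]
  constructor
  · rintro ⟨x, hx⟩
    rw [hdvd] at hx
    refine ⟨?_, ?_, ?_⟩
    · rcases Nat.even_or_odd m with he | ho
      swap
      · exact ho
      exfalso
      have h2 : 2 ∣ m := he.two_dvd
      have : ((2 : ℕ) : ℤ) ∣ x ^ 2 + 3 * x + 3 := dvd_trans (Int.natCast_dvd_natCast.mpr h2) hx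
      have hz : ((x : ZMod 2)) ^ 2 + 3 * (x : ZMod 2) + 3 = 0 := by
        have := (ZMod.intCast_zmod_eq_zero_iff_dvd (x ^ 2 + 3 * x + 3) 2).2 (by exact_mod_cast this)
        push_cast at this
        exact this
      have : ∀ z : ZMod 2, z ^ 2 + 3 * z + 3 ≠ 0 := by decide
      exact this _ hz
    · intro h9
      have : ((9 : ℕ) : ℤ) ∣ x ^ 2 + 3 * x + 3 := dvd_trans (Int.natCast_dvd_natCast.mpr h9) hx
      have hz : ((x : ZMod 9)) ^ 2 + 3 * (x : ZMod 9) + 3 = 0 := by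
        have := (ZMod.intCast_zmod_eq_zero_iff_dvd (x ^ 2 + 3 * x + 3) 9).2 (by exact_mod_cast this)
        push_cast at this
        exact this
      have : ∀ z : ZMod 9, z ^ 2 + 3 * z + 3 ≠ 0 := by decide
      exact this _ hz
    · intro p hp hp3 hpm
      have hpx : (p : ℤ) ∣ x ^ 2 + 3 * x + 3 := dvd_trans (Int.natCast_dvd_natCast.mpr hpm) hx
      constructor
      · intro h
        have : (p : ℤ) ∣ ((3 : ℕ) : ℤ) := by
          have := dvd_neg.mpr h
          simpa using this
        have h3' := Int.natCast_dvd_natCast.mp this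
        have := Nat.le_of_dvd (by norm_num) h3'
        omega
      · refine ⟨2 * x + 3, ?_⟩
        rw [Int.modEq_iff_dvd]
        refine ⟨-4 * ((x ^ 2 + 3 * x + 3) / (p : ℤ)) , ?_⟩
        obtain ⟨e, he⟩ := hpx
        rw [he, Int.mul_ediv_cancel_left _ (by exact_mod_cast hp.ne_zero : (p : ℤ) ≠ 0)]
        linear_combination -4 * he
  · rintro ⟨hodd, h9, hqr⟩
    -- reduce to ZMod, induct on factorization
    suffices h : ∃ x : ℤ, (m : ℤ) ∣ x ^ 2 + 3 * x + 3 by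
      obtain ⟨x, hx⟩ := h
      exact ⟨x, (hdvd x).2 hx⟩
    clear hdvd hm
    induction m using Nat.recOnPosPrimePosCoprime with
    | prime_pow p n hp hn =>
      have hp' : p.Prime := hp
      rcases lt_or_ge 3 p with h3 | h3
      · have := prime_pow_sol p hp' h3 (hqr p hp' h3 (dvd_pow_self p hn.ne')) n hn
        simpa [Nat.cast_pow] using this
      · interval_cases p
        · exact absurd hp (by norm_num)
        · exact absurd hp (by norm_num)
        · -- p = 2 contradicts odd
          exfalso
          have : Even (2 ^ n) := Nat.even_pow.mpr ⟨even_two, hn.ne'⟩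
          exact (Nat.not_odd_iff_even.mpr this) hodd
        · -- p = 3, n must be 1
          rcases Nat.lt_or_ge n 2 with hn2 | hn2
          · have : n = 1 := by omega
            subst this
            exact ⟨0, by norm_num⟩
          · exfalso
            exact h9 (by calc (9 : ℕ) = 3 ^ 2 := by norm_num
                          _ ∣ 3 ^ n := pow_dvd_pow 3 hn2)
    | zero => simp at hodd
    | one => exact ⟨0, by simp⟩
    | coprime a b ha hb hab iha ihb =>
      have hodda : Odd a := (Nat.odd_mul.mp hodd).1
      have hoddb : Odd b := (Nat.odd_mul.mp hodd).2
      obtain ⟨x, hx⟩ := (bridge a).1 (iha hodda (fun h => h9 (h.mul_right b))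
        (fun p pp p3 pd => hqr p pp p3 (pd.mul_right b)))
      obtain ⟨y, hy⟩ := (bridge b).1 (ihb hoddb (fun h => h9 (h.mul_left a))
        (fun p pp p3 pd => hqr p pp p3 (pd.mul_left a)))
      rw [bridge]
      let e := ZMod.chineseRemainder hab
      refine ⟨e.symm (x, y), ?_⟩
      have : e (e.symm (x, y) ^ 2 + 3 * e.symm (x, y) + 3) = 0 := by
        rw [map_add, map_add, map_pow, map_mul]
        rw [RingEquiv.apply_symm_apply]
        have h3 : e 3 = 3 := by
          have := map_ofNat e 3
          simpa using this
        rw [h3]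
        rw [Prod.ext_iff]
        constructor
        · simpa using hx
        · simpa using hy
      exact e.injective (this.trans (map_zero e).symm)
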